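/- Let F be a finite field with |F| = Q, let M ∈ GL(2, F) have irreducible characteristic polynomial over F and multiplicative order Q² − 1, and set H̄ = ⟨M^{Q−1}⟩. Then for every 1-dimensional subspace l of F², the stabilizer of l in H̄ is Stab_{H̄}(l) = {I₂, −I₂}. -/

import Mathlib

open Module

/-- The action of `A ∈ GL(n, F)` on subspaces of `F^n`: `U · A` is the image of `U`
under the invertible linear map given by the matrix `A`. -/
noncomputable def mapGL {F : Type*} [Field F] {n : ℕ}
    (A : GL (Fin n) F) (U : Submodule F (Fin n → F)) : Submodule F (Fin n → F) :=
  U.map (Matrix.toLin' (A : Matrix (Fin n) (Fin n) F))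

open Matrix Polynomial

lemma eval_charpoly_aux {F : Type*} [Field F] {n : ℕ} (M : Matrix (Fin n) (Fin n) F) (c : F) :
    M.charpoly.eval c = (c • (1 : Matrix (Fin n) (Fin n) F) - M).det := by
  rw [Matrix.charpoly, ← Polynomial.coe_evalRingHom, RingHom.map_det]
  congr 1
  ext i j
  by_cases h : i = j <;>
    simp [charmatrix_apply, h, Matrix.one_apply, Matrix.diagonal_apply]

lemma eigen_scalar_aux {F : Type*} [Field F] (M : GL (Fin 2) F)
    (hirr : Irreducible (Matrix.charpoly (M : Matrix (Fin 2) (Fin 2) F)))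
    (N : Matrix (Fin 2) (Fin 2) F)
    (hcomm : (M : Matrix (Fin 2) (Fin 2) F) * N = N * (M : Matrix (Fin 2) (Fin 2) F))
    (v : Fin 2 → F) (hv : v ≠ 0) (μ : F)
    (hμ : N.mulVec v = μ • v) :
    N = μ • 1 := by
  have hroot : ∀ c : F, ¬ (Matrix.charpoly (M : Matrix (Fin 2) (Fin 2) F)).IsRoot c := by
    intro c hc
    have h2 : (Matrix.charpoly (M : Matrix (Fin 2) (Fin 2) F)).natDegree = 2 := by
      simpa using Matrix.charpoly_natDegree_eq_dim (M : Matrix (Fin 2) (Fin 2) F)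
    obtain ⟨q, hq⟩ := Polynomial.dvd_iff_isRoot.mpr hc
    rcases hirr.isUnit_or_isUnit hq with h | h
    · exact Polynomial.not_isUnit_X_sub_C c h
    · have hq0 : q.natDegree = 0 := Polynomial.natDegree_eq_zero_of_isUnit h
      rw [hq, Polynomial.natDegree_mul (Polynomial.X_sub_C_ne_zero c) h.ne_zero,
        Polynomial.natDegree_X_sub_C, hq0] at h2
      omega
  have hM : ∀ (w : Fin 2 → F), w ≠ 0 → ∀ c : F,
      (M : Matrix (Fin 2) (Fin 2) F).mulVec w ≠ c • w := by
    intro w hw c hc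
    apply hroot c
    rw [Polynomial.IsRoot, eval_charpoly_aux, ← Matrix.exists_mulVec_eq_zero_iff]
    refine ⟨w, hw, ?_⟩
    rw [Matrix.sub_mulVec, Matrix.smul_mulVec, Matrix.one_mulVec, hc, sub_self]
  have hli : LinearIndependent F ![v, (M : Matrix (Fin 2) (Fin 2) F).mulVec v] := by
    rw [LinearIndependent.pair_iff]
    intro s t hst
    rcases eq_or_ne t 0 with ht | ht
    · subst ht
      simp only [zero_smul, add_zero, smul_eq_zero] at hst
      exact ⟨hst.resolve_right hv, rfl⟩
    · exfalso
      have h1 : t • ((M : Matrix (Fin 2) (Fin 2) F).mulVec v) = (-s) • v := by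
        rw [neg_smul]
        exact eq_neg_of_add_eq_zero_right hst
      exact hM v hv (t⁻¹ * (-s))
        (by rw [mul_smul, ← h1, smul_smul, inv_mul_cancel₀ ht, one_smul])
  have hcard : Fintype.card (Fin 2) = finrank F (Fin 2 → F) := by simp
  let b := basisOfLinearIndependentOfCardEqFinrank hli (by simpa using hcard)
  have hb : ⇑b = ![v, (M : Matrix (Fin 2) (Fin 2) F).mulVec v] :=
    coe_basisOfLinearIndependentOfCardEqFinrank hli _
  have : Matrix.toLin' N = Matrix.toLin' (μ • (1 : Matrix (Fin 2) (Fin 2) F)) := by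
    apply b.ext
    intro i
    have h0 : Matrix.toLin' (μ • (1 : Matrix (Fin 2) (Fin 2) F)) = μ • LinearMap.id := by
      ext w
      simp [Matrix.toLin'_apply, Matrix.smul_mulVec, Matrix.one_mulVec]
    rw [h0]
    fin_cases i <;>
      simp only [hb, Fin.mk_zero, Fin.mk_one, Matrix.cons_val_zero, Matrix.cons_val_one,
        Matrix.head_cons, Matrix.toLin'_apply, LinearMap.smul_apply, LinearMap.id_apply]
    · exact hμ
    · rw [Matrix.mulVec_mulVec, ← hcomm, ← Matrix.mulVec_mulVec, hμ, Matrix.mulVec_smul]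
  exact Matrix.toLin'.injective this


/-- Let `F` be a finite field with `|F| = Q`, `M ∈ GL(2, F)` a Singer cycle
(irreducible characteristic polynomial and order `Q² − 1`), and `H̄ = ⟨M^{Q−1}⟩`. Then for
every line `l` of `F²`, the stabilizer of `l` in `H̄` is `{I₂, −I₂}`. -/
theorem stabilizer_line_in_singer_subgroup
    {F : Type*} [Field F] [Fintype F] (M : GL (Fin 2) F)
    (hirr : Irreducible (Matrix.charpoly (M : Matrix (Fin 2) (Fin 2) F)))
    (hord : orderOf M = Fintype.card F ^ 2 - 1)
    (l : Submodule F (Fin 2 → F)) (hl : finrank F l = 1) :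
    {A : GL (Fin 2) F | A ∈ Subgroup.zpowers (M ^ (Fintype.card F - 1)) ∧ mapGL A l = l}
      = {(1 : GL (Fin 2) F), -1} := by
    classical
  set Q := Fintype.card F with hQ
  clear_value Q
  have hQ2 : 2 ≤ Q := hQ ▸ Fintype.one_lt_card
  have hfact : (Q - 1) * (Q + 1) = Q ^ 2 - 1 := by
    have h1 : Q ^ 2 = Q * Q := sq Q
    have h2 : Q * (Q + 1) = Q * Q + Q := by ring
    rw [Nat.sub_mul]
    omega
  have hMpow : M ^ (Q ^ 2 - 1) = 1 := by rw [← hord]; exact pow_orderOf_eq_one M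
  have hg : (M ^ (Q - 1)) ^ (Q + 1) = 1 := by rw [← pow_mul, hfact, hMpow]
  -- extract a spanning vector of l
  obtain ⟨⟨v, hvl⟩, hv0, hspan⟩ := finrank_eq_one_iff'.mp hl
  have hv : v ≠ 0 := fun h => hv0 (Subtype.ext h)
  have hlspan : l = Submodule.span F {v} := by
    apply le_antisymm
    · intro w hw
      obtain ⟨c, hc⟩ := hspan ⟨w, hw⟩
      rw [Submodule.mem_span_singleton]
      exact ⟨c, congrArg Subtype.val hc⟩
    · rw [Submodule.span_le, Set.singleton_subset_iff]; exact hvl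
  have hmapneg : mapGL (-1 : GL (Fin 2) F) l = l := by
    unfold mapGL
    have hcoe : ((-1 : GL (Fin 2) F) : Matrix (Fin 2) (Fin 2) F) = -1 := Units.val_neg 1
    ext x
    simp only [Submodule.mem_map, Matrix.toLin'_apply, hcoe]
    constructor
    · rintro ⟨y, hy, rfl⟩
      rw [Matrix.neg_mulVec, Matrix.one_mulVec]
      exact l.neg_mem hy
    · intro hx
      exact ⟨-x, l.neg_mem hx, by rw [Matrix.neg_mulVec, Matrix.one_mulVec, neg_neg]⟩
  ext A
  simp only [Set.mem_setOf_eq, Set.mem_insert_iff, Set.mem_singleton_iff]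
  constructor
  · rintro ⟨hmem, hmap⟩
    obtain ⟨k, hk⟩ := Subgroup.mem_zpowers_iff.mp hmem
    have hApow : A ^ (Q + 1) = 1 := by
      rw [← hk, ← zpow_natCast ((M ^ (Q - 1)) ^ k), ← _root_.zpow_mul, mul_comm, _root_.zpow_mul, zpow_natCast, hg, _root_.one_zpow]
    have hAcomm : Commute M A := by
      rw [← hk]
      exact ((Commute.refl M).pow_right (Q - 1)).zpow_right k
    have hcomm : (M : Matrix (Fin 2) (Fin 2) F) * A = (A : Matrix (Fin 2) (Fin 2) F) * M := by
      have := congrArg Units.val hAcomm.eq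
      simpa [Units.val_mul] using this
    -- eigenvector
    have hvmem : (A : Matrix (Fin 2) (Fin 2) F).mulVec v ∈ l := by
      rw [← hmap]
      exact ⟨v, hvl, by rw [Matrix.toLin'_apply]⟩
    rw [hlspan, Submodule.mem_span_singleton] at hvmem
    obtain ⟨μ, hμ⟩ := hvmem
    have hA1 : (A : Matrix (Fin 2) (Fin 2) F) = μ • 1 :=
      eigen_scalar_aux M hirr _ hcomm v hv μ hμ.symm
    have hμ0 : μ ≠ 0 := by
      rintro rfl
      apply hv
      have h0 : (A : Matrix (Fin 2) (Fin 2) F).mulVec v = 0 := by rw [hA1]; simp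
      have h1 : ((A⁻¹ * A : GL (Fin 2) F) : Matrix (Fin 2) (Fin 2) F).mulVec v = v := by
        rw [show (A⁻¹ * A : GL (Fin 2) F) = 1 by group, Units.val_one, Matrix.one_mulVec]
      rw [← h1, Units.val_mul, ← Matrix.mulVec_mulVec, h0, Matrix.mulVec_zero]
    have hμQ1 : μ ^ (Q + 1) = 1 := by
      have := congrArg Units.val hApow
      rw [Units.val_pow_eq_pow_val, hA1, _root_.smul_pow, one_pow, Units.val_one] at this
      have h00 := congrFun (congrFun this 0) 0
      simpa using h00
    have hμQm1 : μ ^ (Q - 1) = 1 := hQ ▸ FiniteField.pow_card_sub_one_eq_one μ hμ0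
    have hμ2 : μ * μ = 1 := by
      have h : Q + 1 = (Q - 1) + 2 := by omega
      rw [h, pow_add, hμQm1, one_mul, pow_two] at hμQ1
      exact hμQ1
    rcases mul_self_eq_one_iff.mp hμ2 with h | h
    · left; apply Units.ext; rw [hA1, h, one_smul, Units.val_one]
    · right; apply Units.ext
      rw [hA1, h, Units.val_neg, Units.val_one, neg_smul, one_smul]
  · rintro (rfl | rfl)
    · refine ⟨Subgroup.one_mem _, ?_⟩
      unfold mapGL
      rw [Units.val_one, Matrix.toLin'_one, Submodule.map_id]
    · refine ⟨?_, hmapneg⟩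
      by_cases h2 : (-1 : GL (Fin 2) F) = 1
      · rw [h2]; exact Subgroup.one_mem _
      · have hF : (-1 : F) ≠ 1 := by
          intro h
          apply h2
          apply Units.ext
          rw [Units.val_neg, Units.val_one,
            show (-1 : Matrix (Fin 2) (Fin 2) F) = (-1 : F) • 1 by rw [neg_smul, one_smul],
            h, one_smul]
        have hchar : ringChar F ≠ 2 := fun h => hF (neg_one_eq_one_iff.mpr h)
        have hodd : Q % 2 = 1 := hQ ▸ FiniteField.odd_card_of_char_ne_two hchar
        have hQQ : Q ^ 2 = Q * Q := sq Q
        have hQQodd : Q * Q % 2 = 1 := by rw [Nat.mul_mod, hodd]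
        have h2dvd : 2 ∣ Q + 1 := by omega
        have h2dvd' : 2 ∣ Q ^ 2 - 1 := by omega
        set B := M ^ ((Q ^ 2 - 1) / 2) with hB
        have hB2 : B ^ 2 = 1 := by
          rw [hB, ← pow_mul, Nat.div_mul_cancel h2dvd', hMpow]
        have hQQ4 : 4 ≤ Q * Q := Nat.mul_le_mul hQ2 hQ2
        have hBne : B ≠ 1 := by
          intro h
          have hdvd := orderOf_dvd_of_pow_eq_one h
          rw [hord] at hdvd
          have := Nat.le_of_dvd (by omega) hdvd
          omega
        have hBcomm : (M : Matrix (Fin 2) (Fin 2) F) * B = (B : Matrix (Fin 2) (Fin 2) F) * M := by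
          have h := ((Commute.refl M).pow_right ((Q ^ 2 - 1) / 2)).eq
          have := congrArg Units.val h
          simpa [Units.val_mul, hB] using this
        have hBsq : (B : Matrix (Fin 2) (Fin 2) F) ^ 2 = 1 := by
          have := congrArg Units.val hB2
          simpa [Units.val_pow_eq_pow_val] using this
        have hBneg : B = -1 := by
          by_cases hC : (B : Matrix (Fin 2) (Fin 2) F) + 1 = 0
          · exact Units.ext (by rw [Units.val_neg, Units.val_one]; exact eq_neg_of_add_eq_zero_left hC)
          · exfalso
            have hex : ∃ w, ((B : Matrix (Fin 2) (Fin 2) F) + 1).mulVec w ≠ 0 := by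
              by_contra h
              push_neg at h
              apply hC
              apply Matrix.toLin'.injective
              refine LinearMap.ext fun w => ?_
              rw [Matrix.toLin'_apply, h w, map_zero, LinearMap.zero_apply]
            obtain ⟨w, hw⟩ := hex
            have hu : (B : Matrix (Fin 2) (Fin 2) F).mulVec
                (((B : Matrix (Fin 2) (Fin 2) F) + 1).mulVec w)
                = (1 : F) • (((B : Matrix (Fin 2) (Fin 2) F) + 1).mulVec w) := by
              rw [Matrix.mulVec_mulVec, one_smul]
              congr 1
              rw [mul_add, mul_one, ← pow_two, hBsq, add_comm]
            have := eigen_scalar_aux M hirr _ hBcomm _ hw 1 hu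
            rw [one_smul] at this
            exact hBne (Units.ext this)
        refine Subgroup.mem_zpowers_iff.mpr ⟨((Q + 1) / 2 : ℕ), ?_⟩
        have harith : (Q - 1) * ((Q + 1) / 2) = (Q ^ 2 - 1) / 2 := by
          rw [← Nat.mul_div_assoc _ h2dvd, hfact]
        rw [zpow_natCast, ← pow_mul, harith, ← hB, hBneg]
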